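/- Let U be an m-dimensional K-subspace of F and let s be a positive integer with gcd(n,s) = 1. Then the set {a_0 X + a_1 X^{q^s} + ... + a_{m−1} X^{q^{s(m−1)}} : a_0, ..., a_{m−1} ∈ F} is a complete system of distinct representatives for L_{F/K}/(θ_U); equivalently, for every f ∈ L_{F/K} there exists a unique tuple (a_0, ..., a_{m−1}) ∈ F^m such that f(x) = Σ_{i=0}^{m−1} a_i x^{q^{si}} for all x ∈ U. -/

import Mathlib

/-- The set `L_{F/K}` of `K`-linearized polynomials over `F`. -/
def linearizedPolys (q : ℕ) (F : Type*) [Field F] : Set (Polynomial F) :=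
  {p | ∀ i : ℕ, p.coeff i ≠ 0 → ∃ j : ℕ, i = q ^ j}

open Finset Polynomial Module

section Aux

variable {K F : Type*} [Field K] [Fintype K] [Field F] [Fintype F] [Algebra K F]

lemma frob_add (q : ℕ) (hq : q = Fintype.card K) (j : ℕ) (x y : F) :
    (x + y) ^ q ^ j = x ^ q ^ j + y ^ q ^ j := by
  obtain ⟨p, hchar⟩ := CharP.exists K
  haveI := hchar
  haveI hp : Fact p.Prime := ⟨CharP.char_is_prime K p⟩
  haveI : CharP F p := charP_of_injective_algebraMap (algebraMap K F).injective p
  obtain ⟨e, -, hcard⟩ := FiniteField.card K p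
  subst hq
  rw [hcard, ← pow_mul]
  exact add_pow_char_pow ..

lemma frob_smul (q : ℕ) (hq : q = Fintype.card K) (j : ℕ) (a : K) (x : F) :
    (algebraMap K F a * x) ^ q ^ j = algebraMap K F a * x ^ q ^ j := by
  subst hq
  rw [mul_pow, ← map_pow, FiniteField.pow_card_pow]

/-- The `K`-linear map `x ↦ x ^ q ^ j` on `F`. -/
noncomputable def qpowLM (q : ℕ) (hq : q = Fintype.card K) (j : ℕ) : F →ₗ[K] F where
  toFun x := x ^ q ^ j
  map_add' x y := frob_add q hq j x y
  map_smul' a x := by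
    simp only [RingHom.id_apply, Algebra.smul_def]
    exact frob_smul q hq j a x

lemma qpowLM_apply (q : ℕ) (hq : q = Fintype.card K) (j : ℕ) (x : F) :
    qpowLM q hq j x = x ^ q ^ j := rfl

lemma fixed_of_pow_card (q : ℕ) (hq : q = Fintype.card K) (x : F) (hx : x ^ q = x) :
    ∃ a : K, algebraMap K F a = x := by
  subst hq
  classical
  have hq2 : 1 < Fintype.card K := Fintype.one_lt_card
  set P : F[X] := X ^ Fintype.card K - X with hP
  have hP0 : P ≠ 0 := FiniteField.X_pow_card_sub_X_ne_zero F hq2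
  set T : Finset F := P.roots.toFinset with hT
  have hsub : (Finset.univ.image (algebraMap K F)) ⊆ T := by
    intro y hy
    obtain ⟨a, -, rfl⟩ := Finset.mem_image.mp hy
    rw [hT, Multiset.mem_toFinset, mem_roots hP0]
    simp [P, IsRoot.def, ← map_pow, FiniteField.pow_card, sub_eq_zero]
  have hcardT : T.card ≤ Fintype.card K := by
    calc T.card ≤ Multiset.card P.roots := P.roots.toFinset_card_le
    _ ≤ P.natDegree := P.card_roots'
    _ = Fintype.card K := FiniteField.X_pow_card_sub_X_natDegree_eq F hq2
  have hcardim : (Finset.univ.image (algebraMap K F)).card = Fintype.card K := by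
    rw [Finset.card_image_of_injective _ (algebraMap K F).injective, Finset.card_univ]
  have heq : Finset.univ.image (algebraMap K F) = T :=
    Finset.eq_of_subset_of_card_le hsub (hcardT.trans_eq hcardim.symm)
  have hxT : x ∈ T := by
    rw [hT, Multiset.mem_toFinset, mem_roots hP0]
    simp [P, IsRoot.def, hx, sub_eq_zero]
  rw [← heq] at hxT
  obtain ⟨a, -, ha⟩ := Finset.mem_image.mp hxT
  exact ⟨a, ha⟩

lemma fixed_of_pow_qs (q n s : ℕ) (hq : q = Fintype.card K) (hn : Module.finrank K F = n)
    (hgcd : Nat.gcd n s = 1) (x : F) (hx : x ^ q ^ s = x) : x ^ q = x := by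
  have hcard : Fintype.card F = q ^ n := by rw [hq, ← hn]; exact card_eq_pow_finrank
  have hxn : x ^ q ^ n = x := by rw [← hcard]; exact FiniteField.pow_card x
  have hpows : ∀ (y : F) (e : ℕ), y ^ q ^ e = y → ∀ t : ℕ, y ^ q ^ (e * t) = y := by
    intro y e hy t
    induction t with
    | zero => simp
    | succ t ih => rw [Nat.mul_succ, pow_add, pow_mul, ih, hy]
  haveI : FiniteDimensional K F := Module.Finite.of_finite
  have hnpos : 0 < n := hn ▸ Module.finrank_pos
  rcases eq_or_lt_of_le (Nat.succ_le_of_lt hnpos) with h1 | h1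
  · rw [← pow_one q, (by omega : 1 = n), hxn]
  · obtain ⟨a, -, ha⟩ := Nat.exists_mul_mod_eq_one_of_coprime
      (Nat.Coprime.symm hgcd) h1
    have hdvd : s * a = n * (s * a / n) + 1 := by
      conv_lhs => rw [← Nat.div_add_mod (s * a) n, ha]
    have h2 : x ^ q ^ (s * a) = x := hpows x s hx a
    rw [hdvd, pow_add, pow_one, pow_mul] at h2
    rw [hpows x n hxn (s * a / n)] at h2
    exact h2

lemma swap_aux {M : Type*} [AddCommMonoid M] (k : ℕ) (f : ℕ → ℕ → M) :
    ∑ t ∈ Finset.range k, ∑ i ∈ Finset.Ioc t k, f t i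
      = ∑ i ∈ Finset.range (k + 1), ∑ t ∈ Finset.range i, f t i := by
  rw [Finset.sum_sigma', Finset.sum_sigma']
  refine Finset.sum_nbij' (fun p => ⟨p.2, p.1⟩) (fun p => ⟨p.2, p.1⟩) ?_ ?_ ?_ ?_ ?_
  · rintro ⟨u, w⟩ h
    simp only [Finset.mem_sigma, Finset.mem_range, Finset.mem_Ioc] at *
    omega
  · rintro ⟨u, w⟩ h
    simp only [Finset.mem_sigma, Finset.mem_range, Finset.mem_Ioc] at *
    omega
  · rintro ⟨u, w⟩ h
    rfl
  · rintro ⟨u, w⟩ h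
    rfl
  · rintro ⟨u, w⟩ h
    rfl

lemma key_vanish (q s : ℕ) (hq : q = Fintype.card K) (hs : 0 < s)
    (hfix : ∀ x : F, x ^ q ^ s = x → ∃ a : K, algebraMap K F a = x) :
    ∀ (k : ℕ) (b : ℕ → F) (V : Submodule K F), k ≤ Module.finrank K V →
      (∀ x ∈ V, ∑ i ∈ Finset.range k, b i * x ^ (q ^ s) ^ i = 0) → ∀ i < k, b i = 0 := by
  haveI : FiniteDimensional K F := Module.Finite.of_finite
  intro k
  induction k with
  | zero => exact fun b V _ _ i hi => absurd hi (Nat.not_lt_zero i)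
  | succ k IH =>
    intro b V hkV hvan
    have hVpos : 0 < Module.finrank K V := lt_of_lt_of_le (Nat.succ_pos k) hkV
    have hVbot : V ≠ ⊥ := by
      rintro rfl
      rw [finrank_bot] at hVpos
      exact lt_irrefl 0 hVpos
    obtain ⟨v, hvV, hv0⟩ := Submodule.exists_mem_ne_zero_of_ne_bot hVbot
    set Q := q ^ s with hQ
    -- move to V' = v⁻¹ • V which contains 1
    have hinj : Function.Injective (LinearMap.mulLeft K (v⁻¹ : F)) := by
      intro a c hac
      simpa using mul_left_cancel₀ (inv_ne_zero hv0) hac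
    set V' := V.map (LinearMap.mulLeft K (v⁻¹ : F)) with hV'
    have hV'rank : Module.finrank K V' = Module.finrank K V :=
      (Submodule.equivMapOfInjective _ hinj V).finrank_eq.symm
    have h1V' : (1 : F) ∈ V' := ⟨v, hvV, by simp [inv_mul_cancel₀ hv0]⟩
    set B : ℕ → F := fun i => b i * v ^ Q ^ i with hB
    have hvanB : ∀ y ∈ V', ∑ i ∈ Finset.range (k + 1), B i * y ^ Q ^ i = 0 := by
      rintro y ⟨x, hxV, rfl⟩
      have hxeq : ∀ i : ℕ, B i * (LinearMap.mulLeft K (v⁻¹ : F) x) ^ Q ^ i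
          = b i * x ^ Q ^ i := by
        intro i
        have hvQ : v ^ Q ^ i ≠ 0 := pow_ne_zero _ hv0
        calc B i * (LinearMap.mulLeft K (v⁻¹ : F) x) ^ Q ^ i
            = b i * v ^ Q ^ i * ((v ^ Q ^ i)⁻¹ * x ^ Q ^ i) := by
              rw [LinearMap.mulLeft_apply, mul_pow, inv_pow]
          _ = b i * x ^ Q ^ i := by
              rw [← mul_assoc, mul_assoc (b i), mul_inv_cancel₀ hvQ, mul_one]
      rw [Finset.sum_congr rfl fun i _ => hxeq i]
      exact hvan x hxV
    have hBsum : ∑ i ∈ Finset.range (k + 1), B i = 0 := by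
      have h := hvanB 1 h1V'
      simpa using h
    -- the linear map φ x = x^Q - x
    set φ : F →ₗ[K] F := qpowLM q hq s - LinearMap.id with hφdef
    have hφ : ∀ x : F, φ x = x ^ Q - x := fun x => rfl
    have hker : ∀ x : F, φ x = 0 → x ∈ Submodule.span K ({1} : Set F) := by
      intro x hx
      have hxQ : x ^ q ^ s = x := by
        have := hφ x ▸ hx
        rw [hφ x] at hx
        rw [← hQ]
        exact sub_eq_zero.mp hx
      obtain ⟨a, ha⟩ := hfix x hxQ
      rw [← ha, Algebra.algebraMap_eq_smul_one]
      exact Submodule.smul_mem _ _ (Submodule.mem_span_singleton_self 1)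
    set W := V'.map φ with hW
    have hWrank : k ≤ Module.finrank K W := by
      have h1 := LinearMap.finrank_range_add_finrank_ker (φ.domRestrict V')
      have h2 : LinearMap.range (φ.domRestrict V') = W := LinearMap.range_domRestrict V' φ
      have h3 : Module.finrank K (LinearMap.ker (φ.domRestrict V')) ≤ 1 := by
        have hle : (LinearMap.ker (φ.domRestrict V')).map V'.subtype
            ≤ Submodule.span K ({1} : Set F) := by
          rintro x ⟨z, hz, rfl⟩
          exact hker _ (LinearMap.mem_ker.mp hz)
        calc Module.finrank K (LinearMap.ker (φ.domRestrict V'))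
            = Module.finrank K ((LinearMap.ker (φ.domRestrict V')).map V'.subtype) :=
              (Submodule.finrank_map_subtype_eq V' _).symm
          _ ≤ Module.finrank K (Submodule.span K ({1} : Set F)) := Submodule.finrank_mono hle
          _ = 1 := finrank_span_singleton one_ne_zero
      rw [h2, hV'rank] at h1
      omega
    set B' : ℕ → F := fun t => ∑ i ∈ Finset.Ioc t k, B i with hB'
    have hvanB' : ∀ y' ∈ W, ∑ t ∈ Finset.range k, B' t * y' ^ Q ^ t = 0 := by
      rintro y' ⟨y, hyV', rfl⟩
      have hQpos : ∀ t : ℕ, Q ^ t ≠ 0 := by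
        intro t
        have : 0 < q := hq ▸ Fintype.card_pos
        positivity
      have hadd : ∀ (t : ℕ) (u w : F), (u + w) ^ Q ^ t = u ^ Q ^ t + w ^ Q ^ t := by
        intro t u w
        rw [hQ, ← pow_mul]
        exact frob_add q hq (s * t) u w
      have hneg : ∀ (t : ℕ) (u : F), (-u) ^ Q ^ t = -(u ^ Q ^ t) := by
        intro t u
        have h0 := hadd t u (-u)
        rw [add_neg_cancel, zero_pow (hQpos t)] at h0
        linear_combination -h0
      have hsub : ∀ t : ℕ, (y ^ Q - y) ^ Q ^ t = y ^ Q ^ (t + 1) - y ^ Q ^ t := by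
        intro t
        rw [sub_eq_add_neg, hadd, hneg, ← pow_mul, ← pow_succ', ← sub_eq_add_neg]
      rw [hφ y]
      calc ∑ t ∈ Finset.range k, B' t * (y ^ Q - y) ^ Q ^ t
          = ∑ t ∈ Finset.range k, ∑ i ∈ Finset.Ioc t k,
              B i * (y ^ Q ^ (t + 1) - y ^ Q ^ t) := by
            refine Finset.sum_congr rfl fun t _ => ?_
            rw [hsub, hB', Finset.sum_mul]
        _ = ∑ i ∈ Finset.range (k + 1), ∑ t ∈ Finset.range i,
              B i * (y ^ Q ^ (t + 1) - y ^ Q ^ t) :=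
            swap_aux k fun t i => B i * (y ^ Q ^ (t + 1) - y ^ Q ^ t)
        _ = ∑ i ∈ Finset.range (k + 1), B i * (y ^ Q ^ i - y) := by
            refine Finset.sum_congr rfl fun i _ => ?_
            rw [← Finset.mul_sum, Finset.sum_range_sub (fun t => y ^ Q ^ t), pow_zero, pow_one]
        _ = (∑ i ∈ Finset.range (k + 1), B i * y ^ Q ^ i)
              - (∑ i ∈ Finset.range (k + 1), B i) * y := by
            rw [Finset.sum_mul, ← Finset.sum_sub_distrib]
            exact Finset.sum_congr rfl fun i _ => by ring
        _ = 0 := by rw [hvanB y hyV', hBsum, zero_mul, sub_zero]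
    have hB'0 : ∀ t < k, B' t = 0 := IH B' W hWrank hvanB'
    have hBstep : ∀ j < k, B (j + 1) = 0 := by
      intro j hj
      have hrec : B' j = B (j + 1) + B' (j + 1) := by
        rw [hB']
        simp only []
        rw [← Finset.sum_Ioc_consecutive _ (Nat.le_succ j) (by omega : j + 1 ≤ k)]
        congr 1
        rw [(by rw [Nat.Ioc_succ_singleton] : Finset.Ioc j (j + 1) = {j + 1}),
          Finset.sum_singleton]
      have hBj1 : B' (j + 1) = 0 := by
        rcases Nat.lt_or_ge (j + 1) k with h | h
        · exact hB'0 _ h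
        · have hjk : j + 1 = k := le_antisymm hj h
          rw [hB']
          simp only [hjk, Finset.Ioc_self, Finset.sum_empty]
      rw [hB'0 j hj, hBj1, add_zero] at hrec
      exact hrec.symm
    have hB0 : B 0 = 0 := by
      have h := hBsum
      rw [Finset.sum_range_succ'] at h
      rw [Finset.sum_eq_zero (fun i hi => hBstep i (Finset.mem_range.mp hi)), zero_add] at h
      exact h
    intro i hi
    have hBi : B i = 0 := by
      cases i with
      | zero => exact hB0
      | succ j => exact hBstep j (by omega)
    rw [hB] at hBi
    simp only [] at hBi
    rcases mul_eq_zero.mp hBi with h | h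
    · exact h
    · exact absurd h (pow_ne_zero _ hv0)

end Aux

/-- For an `m`-dimensional `K`-subspace `U` of `F` and `s` with `gcd(n,s) = 1`, the
polynomials `a₀X + a₁X^{q^s} + ⋯ + a_{m-1}X^{q^{s(m-1)}}` form a complete system of
distinct representatives for `L_{F/K}/(θ_U)`: every `f ∈ linearizedPolys q F` agrees on `U` with
exactly one of them. -/
theorem complete_system_of_representatives
    (K F : Type*) [Field K] [Fintype K] [Field F] [Fintype F] [Algebra K F]
    (q m n s : ℕ) (hq : q = Fintype.card K) (hn : Module.finrank K F = n)
    (hs : 0 < s) (hgcd : Nat.gcd n s = 1)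
    (U : Submodule K F) (hU : Module.finrank K U = m) :
    ∀ f ∈ linearizedPolys q F,
      ∃! a : Fin m → F, ∀ x ∈ U,
        f.eval x = ∑ i : Fin m, a i * x ^ q ^ (s * (i : ℕ)) := by
  haveI : FiniteDimensional K F := Module.Finite.of_finite
  have hfix : ∀ x : F, x ^ q ^ s = x → ∃ a : K, algebraMap K F a = x := fun x hx =>
    fixed_of_pow_card q hq x (fixed_of_pow_qs q n s hq hn hgcd x hx)
  intro f hf
  -- `f.eval` is `K`-linear
  have heval_add : ∀ x y : F, f.eval (x + y) = f.eval x + f.eval y := by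
    intro x y
    rw [Polynomial.eval_eq_sum, Polynomial.eval_eq_sum, Polynomial.eval_eq_sum,
      Polynomial.sum_def, Polynomial.sum_def, Polynomial.sum_def, ← Finset.sum_add_distrib]
    refine Finset.sum_congr rfl fun i hi => ?_
    obtain ⟨j, rfl⟩ := hf i (Polynomial.mem_support_iff.mp hi)
    rw [frob_add q hq j, mul_add]
  have heval_smul : ∀ (a : K) (x : F), f.eval (a • x) = a • f.eval x := by
    intro a x
    rw [Algebra.smul_def, Algebra.smul_def, Polynomial.eval_eq_sum, Polynomial.eval_eq_sum,
      Polynomial.sum_def, Polynomial.sum_def, Finset.mul_sum]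
    refine Finset.sum_congr rfl fun i hi => ?_
    obtain ⟨j, rfl⟩ := hf i (Polynomial.mem_support_iff.mp hi)
    rw [frob_smul q hq j]
    ring
  let T : U →ₗ[K] F :=
    { toFun := fun x => f.eval (x : F)
      map_add' := fun x y => heval_add x y
      map_smul' := fun a x => heval_smul a x }
  -- the linear parametrization
  let Φ : (Fin m → F) →ₗ[F] (U →ₗ[K] F) :=
    { toFun := fun a => ∑ i : Fin m, a i • ((qpowLM q hq (s * (i : ℕ))).domRestrict U)
      map_add' := fun a a' => by
        simp only [Pi.add_apply, add_smul]
        rw [Finset.sum_add_distrib]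
      map_smul' := fun c a => by
        simp only [Pi.smul_apply, smul_eq_mul, RingHom.id_apply, Finset.smul_sum, mul_smul] }
  have hΦapply : ∀ (a : Fin m → F) (x : U),
      Φ a x = ∑ i : Fin m, a i * (x : F) ^ q ^ (s * (i : ℕ)) := by
    intro a x
    simp only [Φ, LinearMap.coe_mk, AddHom.coe_mk, LinearMap.coe_sum, Finset.sum_apply,
      LinearMap.sum_apply, LinearMap.smul_apply, LinearMap.domRestrict_apply, qpowLM_apply,
      smul_eq_mul]
  have hΦinj : Function.Injective Φ := by
    rw [injective_iff_map_eq_zero Φ]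
    intro a ha
    set b : ℕ → F := fun i => if h : i < m then a ⟨i, h⟩ else 0 with hb
    have hvan : ∀ x ∈ U, ∑ i ∈ Finset.range m, b i * x ^ (q ^ s) ^ i = 0 := by
      intro x hx
      have h1 : Φ a ⟨x, hx⟩ = 0 := by rw [ha]; rfl
      rw [hΦapply] at h1
      rw [← Fin.sum_univ_eq_sum_range (fun i => b i * x ^ (q ^ s) ^ i) m]
      rw [← h1]
      refine Finset.sum_congr rfl fun i _ => ?_
      rw [hb]
      simp only [i.isLt, dif_pos, Fin.eta, ← pow_mul]
    have hall := key_vanish q s hq hs hfix m b U (le_of_eq hU.symm) hvan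
    funext i
    have h2 := hall i i.isLt
    rw [hb] at h2
    simpa [i.isLt] using h2
  haveI : FiniteDimensional F (U →ₗ[K] F) := Module.Finite.linearMap _ _ _ _
  have hfr : Module.finrank F (Fin m → F) = Module.finrank F (U →ₗ[K] F) := by
    rw [Module.finrank_fin_fun, Module.finrank_linearMap_self, hU]
  have hΦsurj : Function.Surjective Φ :=
    (LinearMap.injective_iff_surjective_of_finrank_eq_finrank hfr).mp hΦinj
  obtain ⟨a, ha⟩ := hΦsurj T
  refine ⟨a, ?_, ?_⟩
  · intro x hx
    have h := DFunLike.congr_fun ha (⟨x, hx⟩ : U)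
    rw [hΦapply] at h
    exact h.symm
  · intro a' ha'
    have hTa' : Φ a' = T := by
      refine LinearMap.ext fun x => ?_
      rw [hΦapply]
      exact (ha' (x : F) x.2).symm
    exact hΦinj (hTa'.trans ha.symm)
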